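/- Every (n,k,r) locally recoverable code over a finite alphabet of size q satisfies d_min ≤ n - k - ⌈k/r⌉ + 2. -/

import Mathlib

section
variable {α : Type*} [Fintype α] [DecidableEq α] {n q : ℕ}

/-- Projection of a word onto a set of coordinates. -/
def lrcProj (S : Finset (Fin n)) (c : Fin n → α) : Fin n → Option α :=
  fun j => if j ∈ S then some (c j) else none

lemma lrcProj_insert_card (C : Finset (Fin n → α)) (hq : Fintype.card α = q)
    {S : Finset (Fin n)} {i : Fin n} (hi : i ∉ S) :
    (C.image (lrcProj (insert i S))).card ≤ (C.image (lrcProj S)).card * q := by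
  classical
  have hcardt : ((C.image (lrcProj S)) ×ˢ ((Finset.univ : Finset α).image some)).card
      = (C.image (lrcProj S)).card * q := by
    rw [Finset.card_product, Finset.card_image_of_injective _ (Option.some_injective α),
      Finset.card_univ, hq]
  rw [← hcardt]
  apply Finset.card_le_card_of_injOn
    (fun g => (fun j => if j = i then none else g j, g i))
  · intro g hg
    simp only [Finset.mem_coe, Finset.mem_image] at hg
    obtain ⟨c, hc, rfl⟩ := hg
    refine Finset.mem_product.2 ⟨?_, ?_⟩
    · refine Finset.mem_image.2 ⟨c, hc, ?_⟩
      funext j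
      by_cases hj : j = i
      · subst hj; simp [lrcProj, hi]
      · simp [lrcProj, hj, Finset.mem_insert]
    · simp [lrcProj]
  · intro g hg g' hg' h
    have h1 := congrArg Prod.fst h
    have h2 := congrArg Prod.snd h
    simp only at h1 h2
    funext j
    by_cases hj : j = i
    · subst hj; exact h2
    · have := congrFun h1 j
      simpa [hj] using this

lemma lrcProj_union_card (C : Finset (Fin n → α)) (hq : Fintype.card α = q) (hq1 : 1 ≤ q)
    (A S : Finset (Fin n)) :
    (C.image (lrcProj (S ∪ A))).card ≤ (C.image (lrcProj S)).card * q ^ A.card := by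
  classical
  induction A using Finset.induction_on generalizing S with
  | empty => simp
  | @insert a A ha ih =>
    rw [Finset.union_insert, Finset.card_insert_of_notMem ha]
    have key : (C.image (lrcProj (insert a (S ∪ A)))).card
        ≤ (C.image (lrcProj (S ∪ A))).card * q := by
      by_cases haS : a ∈ S ∪ A
      · rw [Finset.insert_eq_self.2 haS]
        exact Nat.le_mul_of_pos_right _ hq1
      · exact lrcProj_insert_card C hq haS
    calc (C.image (lrcProj (insert a (S ∪ A)))).card
        ≤ (C.image (lrcProj (S ∪ A))).card * q := key
      _ ≤ (C.image (lrcProj S)).card * q ^ A.card * q :=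
          Nat.mul_le_mul_right _ (ih S)
      _ = (C.image (lrcProj S)).card * q ^ (A.card + 1) := by
          rw [pow_succ, mul_assoc]

lemma lrcProj_erase_card (C : Finset (Fin n → α)) {T I : Finset (Fin n)} {i : Fin n}
    (hiT : i ∈ T) (hII : I ⊆ T) (hiI : i ∉ I)
    (hrec : ∀ c ∈ C, ∀ c' ∈ C, (∀ j ∈ I, c j = c' j) → c i = c' i) :
    (C.image (lrcProj T)).card ≤ (C.image (lrcProj (T.erase i))).card := by
  classical
  apply Finset.card_le_card_of_injOn (fun g => fun j => if j = i then none else g j)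
  · intro g hg
    simp only [Finset.mem_coe, Finset.mem_image] at hg
    obtain ⟨c, hc, rfl⟩ := hg
    refine Finset.mem_image.2 ⟨c, hc, ?_⟩
    funext j
    by_cases hj : j = i
    · subst hj; simp [lrcProj]
    · simp only [lrcProj, Finset.mem_erase]
      rw [if_neg hj]
      by_cases hjT : j ∈ T <;> simp [hjT, hj]
  · intro g hg g' hg' h
    simp only [Finset.mem_coe, Finset.mem_image] at hg hg'
    obtain ⟨c, hc, rfl⟩ := hg
    obtain ⟨c', hc', rfl⟩ := hg'
    have hagree : ∀ j ∈ I, c j = c' j := by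
      intro j hj
      have hjne : j ≠ i := fun hh => hiI (hh ▸ hj)
      have := congrFun h j
      simp only [hjne, if_false, lrcProj, Finset.mem_coe] at this
      rw [if_pos (hII hj), if_pos (hII hj)] at this
      exact Option.some_injective _ this
    have hci : c i = c' i := hrec c hc c' hc' hagree
    funext j
    by_cases hj : j = i
    · subst hj; simp [lrcProj, hiT, hci]
    · have := congrFun h j
      simpa [hj] using this

lemma lrcProj_univ_card (C : Finset (Fin n → α)) :
    C.card ≤ (C.image (lrcProj (Finset.univ : Finset (Fin n)))).card := by
  classical
  rw [Finset.card_image_of_injOn]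
  intro c _ c' _ h
  funext j
  have := congrFun h j
  simp only [lrcProj, Finset.mem_univ, if_true] at this
  exact Option.some_injective _ this

end

/-- Singleton-type bound for LRC codes (Gopalan–Huang–Simitci–Yekhanin):
every `(n,k,r)` LRC code satisfies `d_min ≤ n - k - ⌈k/r⌉ + 2`. -/
theorem lrc_singleton_bound
    {α : Type*} [Fintype α] [DecidableEq α] {n k r q : ℕ} (hk : 0 < k) (hr : 0 < r)
    (hq : Fintype.card α = q)
    (C : Finset (Fin n → α)) (hcard : C.card = q ^ k)
    (hloc : ∀ i : Fin n, ∃ I : Finset (Fin n), i ∉ I ∧ I.card = r ∧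
      ∀ c ∈ C, ∀ c' ∈ C, (∀ j ∈ I, c j = c' j) → c i = c' i)
    (hC2 : 1 < C.card)
    (d : ℕ) (hd : ∀ c ∈ C, ∀ c' ∈ C, c ≠ c' → d ≤ hammingDist c c') :
    (d : ℤ) ≤ (n : ℤ) - (k : ℤ) - ⌈(k : ℚ) / (r : ℚ)⌉ + 2 := by
  classical
  -- q ≥ 2
  have hq1 : 1 < q := by
    by_contra h
    push_neg at h
    have : q ^ k ≤ 1 ^ k := Nat.pow_le_pow_left h k
    rw [one_pow, ← hcard] at this
    omega
  set t : ℕ := (k - 1) / r with ht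
  -- ceiling identity
  have hceil : ⌈(k : ℚ) / (r : ℚ)⌉ = (t : ℤ) + 1 := by
    have hrQ : (0 : ℚ) < (r : ℚ) := by exact_mod_cast hr
    rw [Int.ceil_eq_iff]
    have h1 : t * r ≤ k - 1 := Nat.div_mul_le_self _ _
    have h2 : t * r < k := by omega
    have h3 : k - 1 < (t + 1) * r := (Nat.div_lt_iff_lt_mul hr).1 (Nat.lt_succ_self t)
    have h4 : k ≤ (t + 1) * r := by omega
    constructor
    · rw [lt_div_iff₀ hrQ]
      have h2' : ((t * r : ℕ) : ℚ) < ((k : ℕ) : ℚ) := by exact_mod_cast h2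
      push_cast at h2' ⊢
      linarith
    · rw [div_le_iff₀ hrQ]
      have h4' : ((k : ℕ) : ℚ) ≤ (((t + 1) * r : ℕ) : ℚ) := by exact_mod_cast h4
      push_cast at h4' ⊢
      linarith
  -- main construction
  have main : ∀ j, j ≤ t → ∃ S : Finset (Fin n), S.card ≤ j * (r + 1) ∧
      (C.image (lrcProj S)).card * q ^ j ≤ q ^ S.card := by
    intro j
    induction j with
    | zero =>
      intro _
      refine ⟨∅, by simp, ?_⟩
      simp only [pow_zero, mul_one, Finset.card_empty]
      have hsub : C.image (lrcProj (∅ : Finset (Fin n))) ⊆ {fun _ => none} := by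
        intro g hg
        rcases Finset.mem_image.1 hg with ⟨c, _, rfl⟩
        simp only [Finset.mem_singleton]
        funext j
        simp [lrcProj]
      calc (C.image (lrcProj (∅ : Finset (Fin n)))).card ≤ ({fun _ => none} :
            Finset (Fin n → Option α)).card := Finset.card_le_card hsub
        _ = 1 := Finset.card_singleton _
    | succ j ih =>
      intro hj1
      obtain ⟨S, hS1, hS2⟩ := ih (by omega)
      by_cases hSu : S = Finset.univ
      · exfalso
        have h1 : C.card ≤ (C.image (lrcProj S)).card := hSu ▸ lrcProj_univ_card C
        have h2 : q ^ k * q ^ j ≤ q ^ S.card :=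
          le_trans (Nat.mul_le_mul_right _ (hcard ▸ h1)) hS2
        rw [← pow_add] at h2
        have h3 : k + j ≤ S.card := (Nat.pow_le_pow_iff_right hq1).1 h2
        have h4 : k + j ≤ j * (r + 1) := h3.trans hS1
        have h5 : k ≤ j * r := by
          have : j * (r + 1) = j * r + j := by ring
          omega
        have h6 : t < j := (Nat.div_lt_iff_lt_mul hr).2 (by omega)
        omega
      · obtain ⟨i, hi⟩ : ∃ i, i ∉ S := by
          by_contra h
          push_neg at h
          exact hSu (Finset.eq_univ_iff_forall.2 h)
        obtain ⟨I, hiI, hIcard, hIrec⟩ := hloc i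
        have hiSU : i ∉ S ∪ I := by simp [hi, hiI]
        have hTcard : (insert i (S ∪ I)).card = S.card + (I \ S).card + 1 := by
          rw [Finset.card_insert_of_notMem hiSU, ← Finset.union_sdiff_self_eq_union,
            Finset.card_union_of_disjoint Finset.disjoint_sdiff]
        refine ⟨insert i (S ∪ I), ?_, ?_⟩
        · have hIS : (I \ S).card ≤ r := le_trans (Finset.card_le_card (Finset.sdiff_subset)) hIcard.le
          calc (insert i (S ∪ I)).card = S.card + (I \ S).card + 1 := hTcard
            _ ≤ j * (r + 1) + r + 1 := by omega
            _ = (j + 1) * (r + 1) := by ring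
        · have e1 : (C.image (lrcProj (insert i (S ∪ I)))).card ≤
              (C.image (lrcProj (S ∪ I))).card := by
            have := lrcProj_erase_card C (T := insert i (S ∪ I)) (I := I) (i := i)
              (Finset.mem_insert_self i _)
              (fun x hx => Finset.mem_insert_of_mem (Finset.mem_union_right _ hx)) hiI hIrec
            rwa [Finset.erase_insert hiSU] at this
          have e2 : (C.image (lrcProj (S ∪ I))).card ≤
              (C.image (lrcProj S)).card * q ^ (I \ S).card := by
            have := lrcProj_union_card C hq (by omega) (I \ S) S
            rwa [Finset.union_sdiff_self_eq_union] at this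
          rw [hTcard]
          calc (C.image (lrcProj (insert i (S ∪ I)))).card * q ^ (j + 1)
              ≤ ((C.image (lrcProj S)).card * q ^ (I \ S).card) * q ^ (j + 1) :=
                Nat.mul_le_mul_right _ (e1.trans e2)
            _ = ((C.image (lrcProj S)).card * q ^ j) * q ^ ((I \ S).card + 1) := by ring
            _ ≤ q ^ S.card * q ^ ((I \ S).card + 1) := Nat.mul_le_mul_right _ hS2
            _ = q ^ (S.card + (I \ S).card + 1) := by rw [← pow_add]; ring_nf
  obtain ⟨S, hS1, hS2⟩ := main t le_rfl
  have htr : t * r ≤ k - 1 := Nat.div_mul_le_self _ _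
  have hSm : S.card ≤ (k - 1) + t := by
    have : t * (r + 1) = t * r + t := by ring
    omega
  have hSn : S.card ≤ n := by
    have := Finset.card_le_univ S
    simpa using this
  set m' : ℕ := min ((k - 1) + t) n with hm'
  obtain ⟨S', hSS', -, hS'card⟩ := Finset.exists_subsuperset_card_eq (S.subset_univ)
    (le_min hSm hSn) (by simpa using min_le_right ((k - 1) + t) n)
  rw [← hm'] at hS'card
  have e3 : (C.image (lrcProj S')).card ≤ (C.image (lrcProj S)).card * q ^ (m' - S.card) := by
    have h := lrcProj_union_card C hq (by omega) (S' \ S) S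
    rw [Finset.union_sdiff_of_subset hSS'] at h
    rwa [Finset.card_sdiff_of_subset hSS', hS'card] at h
  have e4 : (C.image (lrcProj S')).card * q ^ t ≤ q ^ m' := by
    have hScard_le : S.card ≤ m' := le_min hSm hSn
    calc (C.image (lrcProj S')).card * q ^ t
        ≤ ((C.image (lrcProj S)).card * q ^ (m' - S.card)) * q ^ t :=
          Nat.mul_le_mul_right _ e3
      _ = ((C.image (lrcProj S)).card * q ^ t) * q ^ (m' - S.card) := by ring
      _ ≤ q ^ S.card * q ^ (m' - S.card) := Nat.mul_le_mul_right _ hS2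
      _ = q ^ (S.card + (m' - S.card)) := by rw [← pow_add]
      _ = q ^ m' := by rw [Nat.add_sub_cancel' hScard_le]
  have hnm : (k - 1) + t ≤ n := by
    by_contra hlt
    push_neg at hlt
    have hm'n : m' = n := by omega
    have hS'univ : S' = Finset.univ := by
      apply Finset.eq_univ_of_card
      rw [hS'card, hm'n]; simp
    have h1 : C.card ≤ (C.image (lrcProj S')).card := hS'univ ▸ lrcProj_univ_card C
    have h2 : q ^ k * q ^ t ≤ q ^ n := by
      rw [← hm'n]
      exact le_trans (Nat.mul_le_mul_right _ (hcard ▸ h1)) e4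
    rw [← pow_add] at h2
    have h3 : k + t ≤ n := (Nat.pow_le_pow_iff_right hq1).1 h2
    omega
  have hm'eq : m' = (k - 1) + t := by omega
  have e5 : (C.image (lrcProj S')).card < C.card := by
    rw [hcard]
    have : (C.image (lrcProj S')).card * q ^ t ≤ q ^ (k - 1) * q ^ t := by
      rw [← pow_add]
      calc (C.image (lrcProj S')).card * q ^ t ≤ q ^ m' := e4
        _ = q ^ (k - 1 + t) := by rw [hm'eq]
    have h6 : (C.image (lrcProj S')).card ≤ q ^ (k - 1) :=
      Nat.le_of_mul_le_mul_right this (Nat.pow_pos (by omega))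
    exact lt_of_le_of_lt h6 (Nat.pow_lt_pow_right hq1 (by omega))
  obtain ⟨c, hc, c', hc', hne, heq⟩ := Finset.exists_ne_map_eq_of_card_lt_of_maps_to e5
    (fun c hc => Finset.mem_image_of_mem (lrcProj S') hc)
  have hagree : ∀ j ∈ S', c j = c' j := by
    intro j hj
    have := congrFun heq j
    simp only [lrcProj, if_pos hj] at this
    exact Option.some_injective _ this
  have hham : hammingDist c c' ≤ n - S'.card := by
    have hsub : ({i | c i ≠ c' i} : Finset (Fin n)) ⊆ Finset.univ \ S' := by
      intro j hj
      simp only [Finset.mem_filter, Finset.mem_univ, true_and] at hj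
      simp only [Finset.mem_sdiff, Finset.mem_univ, true_and]
      intro hjS'
      exact hj (hagree j hjS')
    calc hammingDist c c' ≤ (Finset.univ \ S').card := Finset.card_le_card hsub
      _ = n - S'.card := by rw [Finset.card_sdiff_of_subset (S'.subset_univ)]; simp
  have hdle : d ≤ n - ((k - 1) + t) := by
    have := hd c hc c' hc' hne
    rw [hS'card, hm'eq] at hham
    omega
  rw [hceil]
  omega
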